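/- Let C ⊆ ℝ^2 be the cone generated by (1,0) and (1,√2). Then the monoid C ∩ ℤ^2 is not finitely generated; consequently the monoid ring S[C ∩ ℤ^2] is not a finitely generated S-algebra for any nonzero ring S. -/

import Mathlib

/-- The monoid `C ∩ ℤ²` of integer points of the cone `C ⊆ ℝ²` generated by
`(1,0)` and `(1,√2)`: the pairs `(a,b)` with `0 ≤ b` and `b ≤ a·√2`. -/
def sqrt2ConePoints : AddSubmonoid (ℤ × ℤ) where
  carrier := {p | 0 ≤ p.2 ∧ (p.2 : ℝ) ≤ (p.1 : ℝ) * Real.sqrt 2}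
  zero_mem' := ⟨le_refl 0, by norm_num⟩
  add_mem' := by
    rintro ⟨a1, b1⟩ ⟨a2, b2⟩ ⟨h1, h1'⟩ ⟨h2, h2'⟩
    refine ⟨add_nonneg h1 h2, ?_⟩
    simp only [Prod.snd_add, Prod.fst_add] at *
    push_cast
    nlinarith [h1', h2']


def pellSeq : ℕ → ℤ × ℤ
  | 0 => (1, 1)
  | k+1 => (3 * (pellSeq k).1 + 2 * (pellSeq k).2, 4 * (pellSeq k).1 + 3 * (pellSeq k).2)

lemma pellSeq_pos (k : ℕ) : 1 ≤ (pellSeq k).1 ∧ 1 ≤ (pellSeq k).2 := by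
  induction k with
  | zero => exact ⟨le_refl 1, le_refl 1⟩
  | succ n ih => exact ⟨by simp only [pellSeq]; omega, by simp only [pellSeq]; omega⟩

lemma pellSeq_eq (k : ℕ) : (pellSeq k).2 ^ 2 = 2 * (pellSeq k).1 ^ 2 - 1 := by
  induction k with
  | zero => norm_num [pellSeq]
  | succ n ih => simp only [pellSeq]; ring_nf; ring_nf at ih; omega

lemma pellSeq_growth (k : ℕ) : (k : ℤ) + 1 ≤ (pellSeq k).1 := by
  induction k with
  | zero => norm_num [pellSeq]
  | succ n ih =>
    have h := pellSeq_pos n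
    simp only [pellSeq]
    push_cast
    omega

lemma pellSeq_mem (k : ℕ) : pellSeq k ∈ sqrt2ConePoints := by
  obtain ⟨ha, hb⟩ := pellSeq_pos k
  have he := pellSeq_eq k
  refine ⟨by omega, ?_⟩
  have h2 : ((pellSeq k).2 : ℝ) ^ 2 ≤ 2 * ((pellSeq k).1 : ℝ) ^ 2 := by
    have : ((pellSeq k).2 ^ 2 : ℤ) ≤ 2 * (pellSeq k).1 ^ 2 := by omega
    exact_mod_cast this
  have ha' : (0:ℝ) ≤ ((pellSeq k).1 : ℝ) := by exact_mod_cast (by omega : (0:ℤ) ≤ (pellSeq k).1)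
  have hb' : (0:ℝ) ≤ ((pellSeq k).2 : ℝ) := by exact_mod_cast (by omega : (0:ℤ) ≤ (pellSeq k).2)
  calc ((pellSeq k).2 : ℝ) = Real.sqrt (((pellSeq k).2 : ℝ) ^ 2) := by
        rw [Real.sqrt_sq hb']
    _ ≤ Real.sqrt (2 * ((pellSeq k).1 : ℝ) ^ 2) := Real.sqrt_le_sqrt h2
    _ = ((pellSeq k).1 : ℝ) * Real.sqrt 2 := by
        rw [mul_comm, Real.sqrt_mul (by positivity), Real.sqrt_sq ha', mul_comm]

lemma cone_facts {p : ℤ × ℤ} (hp : p ∈ sqrt2ConePoints) :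
    0 ≤ p.1 ∧ 0 ≤ p.2 ∧ (p.1 = 0 → p.2 = 0) ∧ p.2 ^ 2 ≤ 2 * p.1 ^ 2 ∧
      (0 < p.1 → p.2 ^ 2 < 2 * p.1 ^ 2) := by
  obtain ⟨hb, hr⟩ := hp
  have hs2 : (0:ℝ) < Real.sqrt 2 := Real.sqrt_pos.2 (by norm_num)
  have hs2' : Real.sqrt 2 ^ 2 = 2 := Real.sq_sqrt (by norm_num)
  have hb' : (0:ℝ) ≤ (p.2 : ℝ) := by exact_mod_cast hb
  have ha : 0 ≤ p.1 := by
    by_contra h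
    push_neg at h
    have : (p.1 : ℝ) < 0 := by exact_mod_cast h
    nlinarith
  have hsq : p.2 ^ 2 ≤ 2 * p.1 ^ 2 := by
    have : ((p.2 : ℝ)) ^ 2 ≤ 2 * ((p.1 : ℝ)) ^ 2 := by nlinarith
    exact_mod_cast this
  have hz : p.1 = 0 → p.2 = 0 := by intro h; rw [h] at hsq; nlinarith
  refine ⟨ha, hb, hz, hsq, ?_⟩
  intro hpos
  rcases lt_or_eq_of_le hsq with h | h
  · exact h
  · exfalso
    have ha' : (0:ℝ) < (p.1 : ℝ) := by exact_mod_cast hpos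
    have heq : ((p.2 : ℝ)) ^ 2 = 2 * ((p.1 : ℝ)) ^ 2 := by exact_mod_cast h
    have : (p.2 : ℝ) = (p.1 : ℝ) * Real.sqrt 2 := by nlinarith
    exact irrational_sqrt_two ⟨(p.2 : ℚ) / (p.1 : ℚ), by
      push_cast
      rw [div_eq_iff (by positivity : ((p.1:ℝ)) ≠ 0)]
      rw [this]; ring⟩

lemma cone_not_fg : ¬ sqrt2ConePoints.FG := by
  rintro ⟨T, hT⟩
  classical
  set Q : Finset ℚ := insert 0 (T.image fun p => (p.2 : ℚ) / p.1) with hQ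
  have hQne : Q.Nonempty := ⟨0, Finset.mem_insert_self _ _⟩
  set q : ℚ := Q.max' hQne with hqdef
  have hq0 : 0 ≤ q := Finset.le_max' Q 0 (Finset.mem_insert_self _ _)
  have hmemT : ∀ p ∈ T, p ∈ sqrt2ConePoints := fun p hp =>
    hT ▸ AddSubmonoid.subset_closure hp
  -- q^2 < 2
  have hqsq : q ^ 2 < 2 := by
    have hqQ : q ∈ Q := Q.max'_mem hQne
    rw [hQ, Finset.mem_insert] at hqQ
    rcases hqQ with h | h
    · rw [h]; norm_num
    · obtain ⟨p, hpT, hpq⟩ := Finset.mem_image.1 h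
      obtain ⟨ha, hb, hz, hsq, hstrict⟩ := cone_facts (hmemT p hpT)
      rcases eq_or_lt_of_le ha with h0 | h0
      · rw [← hpq, ← h0]
        simp
      · have hlt := hstrict h0
        have ha' : (0:ℚ) < (p.1 : ℚ) := by exact_mod_cast h0
        rw [← hpq, div_pow, div_lt_iff₀ (by positivity)]
        exact_mod_cast hlt
  -- every generator satisfies b ≤ q a
  have hgen : ∀ p ∈ T, (p.2 : ℚ) ≤ q * p.1 := by
    intro p hpT
    obtain ⟨ha, hb, hz, hsq, hstrict⟩ := cone_facts (hmemT p hpT)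
    rcases eq_or_lt_of_le ha with h0 | h0
    · rw [hz h0.symm, ← h0]; simp
    · have ha' : (0:ℚ) < (p.1 : ℚ) := by exact_mod_cast h0
      have hle : (p.2 : ℚ) / p.1 ≤ q :=
        Finset.le_max' Q _ (Finset.mem_insert_of_mem
          (Finset.mem_image.2 ⟨p, hpT, rfl⟩))
      calc (p.2 : ℚ) = ((p.2 : ℚ) / p.1) * p.1 := by field_simp
        _ ≤ q * p.1 := mul_le_mul_of_nonneg_right hle ha'.le
  -- the submonoid of points below the rational ray
  set M' : AddSubmonoid (ℤ × ℤ) :=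
    { carrier := {p | (p.2 : ℚ) ≤ q * p.1}
      zero_mem' := by simp
      add_mem' := by
        rintro ⟨a1, b1⟩ ⟨a2, b2⟩ h1 h2
        simp only [Set.mem_setOf_eq, Prod.snd_add, Prod.fst_add] at *
        push_cast
        linarith [mul_add q (a1 : ℚ) (a2 : ℚ)] } with hM'
  have hle : sqrt2ConePoints ≤ M' := by
    rw [← hT]
    exact AddSubmonoid.closure_le.2 hgen
  -- the Pell point beats it
  set k := q.den with hk
  set n := q.num with hn
  set d := (q.den : ℤ) with hd
  have hd1 : 0 < d := by rw [hd]; exact_mod_cast q.den_pos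
  have hn0 : 0 ≤ n := Rat.num_nonneg.2 hq0
  have hnd : n ^ 2 < 2 * d ^ 2 := by
    have hq' : q = (n : ℚ) / (d : ℚ) := by rw [hn, hd]; exact_mod_cast (Rat.num_div_den q).symm
    rw [hq', div_pow, div_lt_iff₀ (by positivity)] at hqsq
    exact_mod_cast hqsq
  obtain ⟨ha1, hb1⟩ := pellSeq_pos k
  have heq := pellSeq_eq k
  have hgr := pellSeq_growth k
  set a := (pellSeq k).1
  set b := (pellSeq k).2
  have hdk : d = (k : ℤ) := rfl
  have had : d < a := by rw [hdk]; linarith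
  have hm : (b : ℚ) ≤ q * a := hle (pellSeq_mem k)
  have hq' : q = (n : ℚ) / (d : ℚ) := by
    rw [hn, hd]; exact_mod_cast (Rat.num_div_den q).symm
  have hba : b * d ≤ n * a := by
    have hd' : (0:ℚ) < (d:ℚ) := by exact_mod_cast hd1
    have : (b : ℚ) * d ≤ (n : ℚ) * a := by
      rw [hq'] at hm
      calc (b : ℚ) * d ≤ ((n : ℚ) / d * a) * d := by
            exact mul_le_mul_of_nonneg_right hm hd'.le
        _ = (n : ℚ) * a := by field_simp
    exact_mod_cast this
  -- derive contradiction
  have hbd : 0 < b * d := mul_pos (by omega) hd1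
  have hsq : (b * d) ^ 2 ≤ (n * a) ^ 2 := by
    have := mul_self_le_mul_self hbd.le hba
    nlinarith [this]
  have haa : d ^ 2 < a ^ 2 := by nlinarith
  nlinarith [mul_le_mul_of_nonneg_right (show n ^ 2 ≤ 2 * d ^ 2 - 1 from by omega)
    (sq_nonneg a), hsq, haa, sq_nonneg d]

theorem sqrt2_cone_monoid_not_fg :
    ¬ sqrt2ConePoints.FG ∧
    ∀ (S : Type) [Ring S] [Nontrivial S],
      ¬ ∃ t : Finset (AddMonoidAlgebra S ↥sqrt2ConePoints),
        Subring.closure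
          (Set.range (AddMonoidAlgebra.singleZeroRingHom :
              S →+* AddMonoidAlgebra S ↥sqrt2ConePoints) ∪ ↑t) = ⊤ := by
  refine ⟨cone_not_fg, ?_⟩
  intro S _ _ hex
  obtain ⟨t, ht⟩ := hex
  apply cone_not_fg
  classical
  set T : Finset ↥sqrt2ConePoints := t.sup fun f => f.coeff.support with hTdef
  set N : AddSubmonoid ↥sqrt2ConePoints := AddSubmonoid.closure (T : Set ↥sqrt2ConePoints) with hN
  -- the subring of elements supported on N
  set R' : Subring (AddMonoidAlgebra S ↥sqrt2ConePoints) :=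
    { carrier := {f | ∀ m ∈ f.coeff.support, m ∈ N}
      zero_mem' := by simp
      one_mem' := by
        intro m hm
        have := AddMonoidAlgebra.support_coeff_one_subset (k := S) (G := ↥sqrt2ConePoints) hm
        simp only [Finset.mem_zero] at this
        rw [this]
        exact N.zero_mem
      add_mem' := by
        intro f g hf hg m hm
        rcases Finset.mem_union.1 (by rw [AddMonoidAlgebra.coeff_add] at hm; exact Finsupp.support_add hm) with h | h
        · exact hf m h
        · exact hg m h
      neg_mem' := by
        intro f hf m hm
        exact hf m (by rwa [AddMonoidAlgebra.coeff_neg, Finsupp.support_neg] at hm)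
      mul_mem' := by
        intro f g hf hg m hm
        obtain ⟨x, hx, y, hy, hxy⟩ := Finset.mem_add.1 (AddMonoidAlgebra.support_coeff_mul_subset f g hm)
        exact hxy ▸ N.add_mem (hf x hx) (hg y hy) } with hR'
  have hgen : Set.range (AddMonoidAlgebra.singleZeroRingHom :
      S →+* AddMonoidAlgebra S ↥sqrt2ConePoints) ∪ ↑t ⊆ R' := by
    rintro f (⟨s, rfl⟩ | hf)
    · intro m hm
      have := Finsupp.support_single_subset hm
      simp only [Finset.mem_singleton] at this
      rw [this]
      exact N.zero_mem
    · intro m hm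
      exact AddSubmonoid.subset_closure
        (Finset.mem_of_subset (Finset.le_sup (f := fun f => f.coeff.support) hf) hm)
  have htop : (⊤ : Subring (AddMonoidAlgebra S ↥sqrt2ConePoints)) ≤ R' := by
    rw [← ht]
    exact Subring.closure_le.2 hgen
  have hNtop : N = ⊤ := by
    rw [eq_top_iff]
    intro m _
    have hmem : (AddMonoidAlgebra.single m (1:S)) ∈ R' := htop trivial
    exact hmem m (by
      rw [AddMonoidAlgebra.coeff_single, Finsupp.support_single_ne_zero m one_ne_zero]
      exact Finset.mem_singleton_self m)
  have hMfg : AddMonoid.FG ↥sqrt2ConePoints := ⟨⟨T, hNtop⟩⟩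
  exact (AddMonoid.fg_iff_addSubmonoid_fg _).mp hMfg
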